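/- The function W(r) := V_YMH(r) − 2/r², where V_YMH(r) = 1/sinh²(r) + 2/r² − 2coth(r)/r + coth²(r), extends to a continuous bounded function on [0,∞) with limit C₀ = 1 at infinity, and ∫₁^∞ (W(r) − 1)² dr < ∞. -/

import Mathlib

open MeasureTheory Set Filter Topology Real

lemma lim_main : Tendsto (fun r : ℝ => (2*r - Real.sinh (2*r))/r^3) (𝓝[>] (0:ℝ)) (𝓝 (-4/3)) := by
  have hpos : ∀ᶠ r : ℝ in 𝓝[>] (0:ℝ), 0 < r := eventually_mem_nhdsWithin
  -- level 3
  have h3 : Tendsto (fun r : ℝ => (-8*Real.cosh (2*r))/6) (𝓝[>] (0:ℝ)) (𝓝 (-4/3)) := by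
    have hc : ContinuousAt (fun r : ℝ => (-8*Real.cosh (2*r))/6) 0 := by fun_prop
    have h : Tendsto (fun r : ℝ => (-8*Real.cosh (2*r))/6) (𝓝[>] (0:ℝ))
        (𝓝 ((-8*Real.cosh (2*0))/6)) := hc.tendsto.mono_left (nhdsWithin_le_nhds (s := Set.Ioi 0))
    have e : ((-8*Real.cosh (2*0))/6 : ℝ) = -4/3 := by norm_num
    rwa [e] at h
  -- level 2
  have h2 : Tendsto (fun r : ℝ => (-4*Real.sinh (2*r))/(6*r)) (𝓝[>] (0:ℝ)) (𝓝 (-4/3)) := by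
    apply HasDerivAt.lhopital_zero_nhdsGT
      (f' := fun r : ℝ => -8*Real.cosh (2*r)) (g' := fun r : ℝ => 6)
    · refine Eventually.of_forall fun r => ?_
      have h := (((hasDerivAt_id r).const_mul (2:ℝ)).sinh.const_mul (-4:ℝ))
      have e : (-8:ℝ)*Real.cosh (2*r) = -4*(Real.cosh (2*r)*(2*1)) := by ring
      rw [e]; exact h
    · refine Eventually.of_forall fun r => ?_
      have h := (hasDerivAt_id r).const_mul (6:ℝ)
      simpa using h
    · exact Eventually.of_forall fun r => by norm_num
    · have hc : ContinuousAt (fun r : ℝ => -4*Real.sinh (2*r)) 0 := by fun_prop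
      have := hc.tendsto.mono_left (nhdsWithin_le_nhds (s := Set.Ioi 0))
      simpa using this
    · have hc : ContinuousAt (fun r : ℝ => 6*r) 0 := by fun_prop
      have := hc.tendsto.mono_left (nhdsWithin_le_nhds (s := Set.Ioi 0))
      simpa using this
    · exact h3
  -- level 1
  have h1 : Tendsto (fun r : ℝ => (2 - 2*Real.cosh (2*r))/(3*r^2)) (𝓝[>] (0:ℝ)) (𝓝 (-4/3)) := by
    apply HasDerivAt.lhopital_zero_nhdsGT
      (f' := fun r : ℝ => -4*Real.sinh (2*r)) (g' := fun r : ℝ => 6*r)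
    · refine Eventually.of_forall fun r => ?_
      have h := ((((hasDerivAt_id r).const_mul (2:ℝ)).cosh.const_mul (2:ℝ)).const_sub (2:ℝ))
      have e : (-4:ℝ)*Real.sinh (2*r) = -(2*(Real.sinh (2*r)*(2*1))) := by ring
      rw [e]; exact h
    · refine Eventually.of_forall fun r => ?_
      have h := (hasDerivAt_pow 2 r).const_mul (3:ℝ)
      have e : (6:ℝ)*r = 3*((2:ℕ)*r^(2-1)) := by norm_num; try ring
      rw [e]; exact h
    · exact hpos.mono fun r hr => by positivity
    · have hc : ContinuousAt (fun r : ℝ => 2 - 2*Real.cosh (2*r)) 0 := by fun_prop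
      have := hc.tendsto.mono_left (nhdsWithin_le_nhds (s := Set.Ioi 0))
      simpa using this
    · have hc : ContinuousAt (fun r : ℝ => (3:ℝ)*r^2) 0 := by fun_prop
      have := hc.tendsto.mono_left (nhdsWithin_le_nhds (s := Set.Ioi 0))
      simpa using this
    · exact h2
  -- level 0
  apply HasDerivAt.lhopital_zero_nhdsGT
    (f' := fun r : ℝ => 2 - 2*Real.cosh (2*r)) (g' := fun r : ℝ => 3*r^2)
  · refine Eventually.of_forall fun r => ?_
    have h := (((hasDerivAt_id r).const_mul (2:ℝ))).sub (((hasDerivAt_id r).const_mul (2:ℝ)).sinh)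
    have e : (2:ℝ) - 2*Real.cosh (2*r) = 2*1 - Real.cosh (2*r)*(2*1) := by ring
    rw [e]; exact h
  · refine Eventually.of_forall fun r => ?_
    have h := hasDerivAt_pow 3 r
    have e : (3:ℝ)*r^2 = (3:ℕ)*r^(3-1) := by norm_num
    rw [e]; exact h
  · exact hpos.mono fun r hr => by positivity
  · have hc : ContinuousAt (fun r : ℝ => 2*r - Real.sinh (2*r)) 0 := by fun_prop
    have := hc.tendsto.mono_left (nhdsWithin_le_nhds (s := Set.Ioi 0))
    simpa using this
  · have hc : ContinuousAt (fun r : ℝ => r^3) 0 := by fun_prop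
    have := hc.tendsto.mono_left (nhdsWithin_le_nhds (s := Set.Ioi 0))
    simpa using this
  · exact h1

lemma lim_slope : Tendsto (fun r : ℝ => r / Real.sinh r) (𝓝[>] (0:ℝ)) (𝓝 1) := by
  have h : Tendsto (fun r : ℝ => Real.sinh r / r) (𝓝[≠] (0:ℝ)) (𝓝 1) := by
    have := (Real.hasDerivAt_sinh 0)
    rw [hasDerivAt_iff_tendsto_slope, Real.cosh_zero] at this
    refine this.congr fun r => ?_
    simp [slope_def_field]
  have h2 : Tendsto (fun r : ℝ => Real.sinh r / r) (𝓝[>] (0:ℝ)) (𝓝 1) :=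
    h.mono_left (nhdsWithin_mono 0 (fun x hx => ne_of_gt hx))
  have h3 := h2.inv₀ (by norm_num)
  simpa [inv_div] using h3

noncomputable def Wfun : ℝ → ℝ :=
  fun r => if r = 0 then (-1/3 : ℝ) else 1 + 2/(Real.sinh r)^2 - 2*(Real.cosh r/Real.sinh r)/r

lemma Wfun_eq {r : ℝ} (hr : 0 < r) :
    Wfun r = 1 + ((2*r - Real.sinh (2*r))/r^3) * (r/Real.sinh r)^2 := by
  have hs : Real.sinh r ≠ 0 := ne_of_gt (Real.sinh_pos_iff.mpr hr)
  rw [Wfun, if_neg hr.ne', Real.sinh_two_mul]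
  field_simp
  ring

lemma W_tendsto_zero : Tendsto Wfun (𝓝[>] (0:ℝ)) (𝓝 (-1/3)) := by
  have h := (tendsto_const_nhds (x := (1:ℝ))).add (lim_main.mul (lim_slope.pow 2))
  have h2 : Tendsto (fun r : ℝ => 1 + ((2*r - Real.sinh (2*r))/r^3) * (r/Real.sinh r)^2)
      (𝓝[>] (0:ℝ)) (𝓝 (-1/3)) := by
    convert h using 2
    norm_num
  exact h2.congr' (eventually_mem_nhdsWithin.mono fun r hr => (Wfun_eq hr).symm) |>.congr
    (fun r => rfl) |>.mono_left le_rfl |>.congr (fun r => rfl)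

lemma W_contOn : ContinuousOn Wfun (Ici (0:ℝ)) := by
  intro x hx
  rcases eq_or_lt_of_le (mem_Ici.mp hx : (0:ℝ) ≤ x) with h0 | h0
  · subst h0
    have : Ici (0:ℝ) = insert 0 (Ioi 0) := by rw [Set.Ioi_insert]
    rw [ContinuousWithinAt, this, nhdsWithin_insert, Filter.tendsto_sup]
    constructor
    · simpa [Wfun] using tendsto_pure_nhds Wfun 0
    · have : Wfun 0 = -1/3 := by simp [Wfun]
      rw [this]; exact W_tendsto_zero
  · apply ContinuousAt.continuousWithinAt
    have hs : Real.sinh x ≠ 0 := ne_of_gt (Real.sinh_pos_iff.mpr h0)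
    have hcg : ContinuousAt (fun r : ℝ => 1 + 2/(Real.sinh r)^2
        - 2*(Real.cosh r/Real.sinh r)/r) x := by
      fun_prop (disch := first | exact pow_ne_zero 2 hs | exact hs | exact h0.ne')
    apply hcg.congr
    filter_upwards [eventually_ne_nhds h0.ne'] with r hr
    rw [Wfun, if_neg hr]

lemma W_atTop : Tendsto Wfun atTop (𝓝 1) := by
  have hsinh : Tendsto Real.sinh atTop atTop := by
    apply tendsto_atTop_mono' atTop _ tendsto_id
    filter_upwards [eventually_ge_atTop (0:ℝ)] with r hr
    exact Real.self_le_sinh_iff.mpr hr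
  have hsq : Tendsto (fun r : ℝ => (Real.sinh r)^2) atTop atTop :=
    (hsinh.atTop_mul_atTop₀ hsinh).congr fun r => (pow_two _).symm
  have h2 : Tendsto (fun r : ℝ => 2/(Real.sinh r)^2) atTop (𝓝 0) :=
    Tendsto.div_atTop tendsto_const_nhds hsq
  have hexp : Tendsto (fun r : ℝ => Real.exp (-r)/Real.sinh r) atTop (𝓝 0) :=
    Tendsto.div_atTop Real.tendsto_exp_neg_atTop_nhds_zero hsinh
  have hcoth : Tendsto (fun r : ℝ => Real.cosh r/Real.sinh r) atTop (𝓝 1) := by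
    have h := (tendsto_const_nhds (x := (1:ℝ))).add hexp
    rw [add_zero] at h
    apply h.congr'
    filter_upwards [eventually_ge_atTop (1:ℝ)] with r hr
    have hs : Real.sinh r ≠ 0 := ne_of_gt (Real.sinh_pos_iff.mpr (by linarith))
    have hc : Real.cosh r = Real.sinh r + Real.exp (-r) := by
      have := Real.cosh_sub_sinh r; linarith
    rw [hc]; field_simp
  have h3 : Tendsto (fun r : ℝ => 2*(Real.cosh r/Real.sinh r)/r) atTop (𝓝 0) :=
    Tendsto.div_atTop (tendsto_const_nhds.mul hcoth) tendsto_id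
  have h := ((tendsto_const_nhds (x := (1:ℝ))).add h2).sub h3
  rw [add_zero, sub_zero] at h
  apply h.congr'
  filter_upwards [eventually_ge_atTop (1:ℝ)] with r hr
  rw [Wfun, if_neg (by positivity : r ≠ 0)]

lemma W_bounded : ∃ M : ℝ, ∀ r ≥ (0:ℝ), |Wfun r| ≤ M := by
  have h1 : ∀ᶠ r : ℝ in atTop, |Wfun r| ≤ 2 := by
    have hb : ∀ᶠ r : ℝ in atTop, Wfun r ∈ Metric.ball (1:ℝ) 1 :=
      W_atTop (Metric.ball_mem_nhds _ one_pos)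
    filter_upwards [hb] with r hr
    rw [Metric.mem_ball, Real.dist_eq] at hr
    calc |Wfun r| = |(Wfun r - 1) + 1| := by ring_nf
    _ ≤ |Wfun r - 1| + |(1:ℝ)| := abs_add_le _ _
    _ ≤ 2 := by rw [abs_one]; linarith
  obtain ⟨A, hA⟩ := eventually_atTop.mp h1
  obtain ⟨C, hC⟩ := (isCompact_Icc (a := (0:ℝ)) (b := max A 0)).exists_bound_of_continuousOn
    (W_contOn.mono (fun x hx => hx.1))
  refine ⟨max C 2, fun r hr => ?_⟩
  rcases le_or_gt r (max A 0) with h | h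
  · calc |Wfun r| = ‖Wfun r‖ := (Real.norm_eq_abs _).symm
    _ ≤ C := hC r ⟨hr, h⟩
    _ ≤ max C 2 := le_max_left _ _
  · exact le_trans (hA r (le_of_lt (lt_of_le_of_lt (le_max_left A 0) h))) (le_max_right _ _)

lemma W_sq_int : MeasureTheory.IntegrableOn (fun r => (Wfun r - 1)^2) (Ioi (1:ℝ)) := by
  have hmeas : AEStronglyMeasurable (fun r => (Wfun r - 1)^2)
      (volume.restrict (Ioi (1:ℝ))) := by
    have hcont : ContinuousOn (fun r => (Wfun r - 1)^2) (Ioi (1:ℝ)) := by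
      apply ContinuousOn.pow
      exact (W_contOn.mono (fun x (hx : x ∈ Ioi 1) => le_of_lt (lt_trans one_pos hx))).sub
        continuousOn_const
    exact hcont.aestronglyMeasurable measurableSet_Ioi
  have hg : MeasureTheory.IntegrableOn (fun r : ℝ => 36 * r^(-2:ℝ)) (Ioi (1:ℝ)) :=
    (integrableOn_Ioi_rpow_of_lt (by norm_num) one_pos).const_mul 36
  apply Integrable.mono' hg hmeas
  rw [ae_restrict_iff' measurableSet_Ioi]
  refine Eventually.of_forall fun r hr => ?_
  rw [mem_Ioi] at hr
  have hr0 : (0:ℝ) < r := lt_trans one_pos hr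
  have hs1 : (r:ℝ) ≤ Real.sinh r := Real.self_le_sinh_iff.mpr hr0.le
  have hs : (0:ℝ) < Real.sinh r := lt_of_lt_of_le hr0 hs1
  have hW : Wfun r = 1 + 2/(Real.sinh r)^2 - 2*(Real.cosh r/Real.sinh r)/r := by
    rw [Wfun, if_neg hr0.ne']
  have hcosh : Real.cosh r ≤ 2 * Real.sinh r := by
    have h1 : Real.cosh r = Real.sinh r + Real.exp (-r) := by
      have := Real.cosh_sub_sinh r; linarith
    have h2 : Real.exp (-r) ≤ 1 := Real.exp_le_one_iff.mpr (by linarith)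
    linarith
  have ha1 : (0:ℝ) ≤ 2/(Real.sinh r)^2 := by positivity
  have ha2 : 2/(Real.sinh r)^2 ≤ 2/r := by
    apply div_le_div_of_nonneg_left (by norm_num) hr0
    nlinarith
  have hb1 : (0:ℝ) ≤ 2*(Real.cosh r/Real.sinh r)/r := by
    have := Real.cosh_pos (x := r); positivity
  have hb2 : 2*(Real.cosh r/Real.sinh r)/r ≤ 4/r := by
    have hq : Real.cosh r / Real.sinh r ≤ 2 := (div_le_iff₀ hs).mpr (by linarith)
    exact (div_le_div_iff_of_pos_right hr0).mpr (by linarith)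
  have h2r : 2/r ≤ 6/r := (div_le_div_iff_of_pos_right hr0).mpr (by norm_num)
  have h4r : 4/r ≤ 6/r := (div_le_div_iff_of_pos_right hr0).mpr (by norm_num)
  have hub : Wfun r - 1 ≤ 6/r := by rw [hW]; linarith
  have hlb : -(6/r) ≤ Wfun r - 1 := by rw [hW]; linarith
  have hsq : (Wfun r - 1)^2 ≤ (6/r)^2 := sq_le_sq' hlb hub
  have hrw : 36 * r^(-2:ℝ) = (6/r)^2 := by
    rw [Real.rpow_neg hr0.le, show (2:ℝ) = ((2:ℕ):ℝ) by norm_num, Real.rpow_natCast]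
    field_simp
    ring
  rw [Real.norm_eq_abs, abs_of_nonneg (sq_nonneg _), hrw]
  exact hsq

/-- `W = V_YMH − 2/r²` extends to a continuous bounded function
on `[0,∞)` with limit `1` at infinity, and `∫₁^∞ (W − 1)² < ∞`. -/
theorem stmt_10 (V : ℝ → ℝ)
    (hV : ∀ r : ℝ, V r = 1/(Real.sinh r)^2 + 2/r^2
        - 2*(Real.cosh r/Real.sinh r)/r + (Real.cosh r/Real.sinh r)^2) :
    ∃ W : ℝ → ℝ,
      ContinuousOn W (Ici (0:ℝ)) ∧
      (∀ r ∈ Ioi (0:ℝ), W r = V r - 2/r^2) ∧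
      (∃ M : ℝ, ∀ r ≥ (0:ℝ), |W r| ≤ M) ∧
      Filter.Tendsto W Filter.atTop (nhds 1) ∧
      IntegrableOn (fun r => (W r - 1)^2) (Ioi (1:ℝ)) := by
  refine ⟨Wfun, W_contOn, ?_, W_bounded, W_atTop, W_sq_int⟩
  intro r hr
  rw [mem_Ioi] at hr
  have hs : Real.sinh r ≠ 0 := ne_of_gt (Real.sinh_pos_iff.mpr hr)
  rw [hV, Wfun, if_neg hr.ne', div_pow, Real.cosh_sq]
  field_simp
  ring
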